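/- Let G be a finite group, X ⊆ S(G) ∩ R(G), and let P = {β₁, …, β_m} ⊆ B be such that the map β_i ↦ β_i λ(G) β_i⁻¹ is a bijection from P onto X. Suppose P is conj-closed: for all i, j there exists k with β_i β_j λ(G) β_j⁻¹ β_i⁻¹ = β_k λ(G) β_k⁻¹. Then all members of X mutually normalize each other: for every N, M ∈ X one has N ≤ Norm_B(M). -/

import Mathlib

open Equiv Pointwise

/-- A subgroup `N ≤ Perm X` is regular if for all `x y : X` there is exactly one
element of `N` sending `x` to `y`. -/
def IsRegularSubgroup {X : Type*} (N : Subgroup (Equiv.Perm X)) : Prop :=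
  ∀ x y : X, ∃! η : N, (η : Equiv.Perm X) x = y

/-- The image `λ(G)` of the left regular representation `λ : G → Perm G`. -/
def lamG (G : Type*) [Group G] : Subgroup (Equiv.Perm G) :=
  (MulAction.toPermHom G G).range

/-- The holomorph `Hol(G) = Norm_B(λ(G))`. -/
def Hol (G : Type*) [Group G] : Subgroup (Equiv.Perm G) :=
  Subgroup.normalizer (lamG G : Set (Equiv.Perm G))

/-- `H(G)`: regular subgroups isomorphic to `G` whose normalizer is `Hol(G)`. -/
def HClass (G : Type*) [Group G] : Set (Subgroup (Equiv.Perm G)) :=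
  {N | IsRegularSubgroup N ∧ Nonempty (N ≃* G) ∧ Subgroup.normalizer (N : Set (Equiv.Perm G)) = Hol G}

/-- `S(G)`: regular subgroups isomorphic to `G` contained in `Hol(G)`. -/
def SClass (G : Type*) [Group G] : Set (Subgroup (Equiv.Perm G)) :=
  {N | IsRegularSubgroup N ∧ Nonempty (N ≃* G) ∧ N ≤ Hol G}

/-- `R(G)`: regular subgroups isomorphic to `G` normalized by `λ(G)`. -/
def RClass (G : Type*) [Group G] : Set (Subgroup (Equiv.Perm G)) :=
  {N | IsRegularSubgroup N ∧ Nonempty (N ≃* G) ∧ lamG G ≤ Subgroup.normalizer (N : Set (Equiv.Perm G))}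

/-- `Q(G)`: members of `S(G) ∩ R(G)` normalized by every member of `S(G) ∩ R(G)`. -/
def QClass (G : Type*) [Group G] : Set (Subgroup (Equiv.Perm G)) :=
  {M ∈ SClass G ∩ RClass G | ∀ N ∈ SClass G ∩ RClass G, N ≤ Subgroup.normalizer (M : Set (Equiv.Perm G))}

/-- Conjugate of a subgroup: `b N b⁻¹`. -/
def conjSub {H : Type*} [Group H] (b : H) (N : Subgroup H) : Subgroup H :=
  Subgroup.map (MulAut.conj b).toMonoidHom N


lemma mem_conjSub {H : Type*} [Group H] {b x : H} {N : Subgroup H} :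
    x ∈ conjSub b N ↔ b⁻¹ * x * b ∈ N := by
  simp only [conjSub, Subgroup.mem_map, MulEquiv.toMonoidHom_eq_coe,
    MonoidHom.coe_coe, MulAut.conj_apply]
  constructor
  · rintro ⟨y, hy, rfl⟩
    simpa [mul_assoc] using hy
  · intro h
    exact ⟨b⁻¹ * x * b, h, by group⟩

lemma conjSub_conjSub {H : Type*} [Group H] (a b : H) (N : Subgroup H) :
    conjSub a (conjSub b N) = conjSub (a * b) N := by
  ext x
  simp [mem_conjSub, mul_assoc]

lemma conjSub_one {H : Type*} [Group H] (N : Subgroup H) : conjSub 1 N = N := by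
  ext x; simp [mem_conjSub]

lemma conjSub_injective {H : Type*} [Group H] (b : H) :
    Function.Injective (conjSub b) := by
  intro N M h
  have := congrArg (conjSub b⁻¹) h
  simpa [conjSub_conjSub, conjSub_one] using this

/-- If `X ⊆ S(G) ∩ R(G)` is parameterized by a conj-closed set `P = {β₁, …, β_m}`, then
the members of `X` mutually normalize each other. -/
theorem mutually_normalizing_of_conjClosed (G : Type*) [Group G] [Finite G]
    (X : Set (Subgroup (Equiv.Perm G))) (hX : X ⊆ SClass G ∩ RClass G)
    (m : ℕ) (β : Fin m → Equiv.Perm G)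
    (hmem : ∀ i, conjSub (β i) (lamG G) ∈ X)
    (hinj : Function.Injective fun i => conjSub (β i) (lamG G))
    (hsurj : ∀ N ∈ X, ∃ i, conjSub (β i) (lamG G) = N)
    (hcc : ∀ i j, ∃ k, conjSub (β i * β j) (lamG G) = conjSub (β k) (lamG G)) :
    ∀ N ∈ X, ∀ M ∈ X, N ≤ Subgroup.normalizer (M : Set (Equiv.Perm G)) := by
  have key : ∀ i, Set.MapsTo (conjSub (β i)) X X := by
    intro i K hK
    obtain ⟨j, rfl⟩ := hsurj K hK
    rw [conjSub_conjSub]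
    obtain ⟨k, hk⟩ := hcc i j
    rw [hk]; exact hmem k
  haveI : Finite (Subgroup (Equiv.Perm G)) :=
    Finite.of_injective _ SetLike.coe_injective
  intro N hN M hM
  obtain ⟨i, hi⟩ := hsurj N hN
  have hsur : Set.SurjOn (conjSub (β i)) X X :=
    ((Set.Finite.injOn_iff_bijOn_of_mapsTo (Set.toFinite X) (key i)).mp
      ((conjSub_injective (β i)).injOn)).surjOn
  obtain ⟨M', hM', hM'eq⟩ := hsur hM
  intro n hn
  rw [← hi, mem_conjSub] at hn
  have hlnorm : (β i)⁻¹ * n * β i ∈ Subgroup.normalizer (M' : Set (Equiv.Perm G)) := (hX hM').2.2.2 hn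
  rw [Subgroup.mem_normalizer_iff]
  intro h
  rw [← hM'eq, mem_conjSub, mem_conjSub]
  have hiff := Subgroup.mem_normalizer_iff.mp hlnorm ((β i)⁻¹ * h * β i)
  have he : (β i)⁻¹ * n * β i * ((β i)⁻¹ * h * β i) * ((β i)⁻¹ * n * β i)⁻¹
      = (β i)⁻¹ * (n * h * n⁻¹) * β i := by group
  rw [hiff, he]
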